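/- Let q > 2. Then I_q(α) → π/√(q-2) as α → α*(q) from the left. -/

import Mathlib

open Set Filter MeasureTheory

noncomputable def fQ (q α t : ℝ) : ℝ := t ^ 2 - 1 - α * t ^ q

noncomputable def alphaStar (q : ℝ) : ℝ := 2 / (q - 2) * ((q - 2) / q) ^ (q / 2)

noncomputable def x0 (q α : ℝ) : ℝ := sInf {t : ℝ | 0 < t ∧ fQ q α t = 0}

noncomputable def x1 (q α : ℝ) : ℝ := sSup {t : ℝ | 0 < t ∧ fQ q α t = 0}

noncomputable def Iq (q α : ℝ) : ℝ := ∫ t in x0 q α..x1 q α, 1 / Real.sqrt (fQ q α t)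

noncomputable def fQd1 (q α t : ℝ) : ℝ := 2 * t - α * q * t ^ (q - 1)

noncomputable def fQd2 (q α t : ℝ) : ℝ := 2 - α * q * (q - 1) * t ^ (q - 2)

noncomputable def fQd3 (q α t : ℝ) : ℝ := -(α * q * (q - 1) * (q - 2) * t ^ (q - 3))

noncomputable def psiQ (q α t : ℝ) : ℝ := fQd1 q α t ^ 2 - 2 * fQ q α t * fQd2 q α t

noncomputable def tstar (q : ℝ) : ℝ := Real.sqrt (q / (q - 2))

section Basics
variable {q : ℝ} (hq : 2 < q)
include hq

lemma hq2 : (0:ℝ) < q - 2 := by linarith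
lemma hq0 : (0:ℝ) < q := by linarith
lemma hP : 1 < q / (q - 2) := (one_lt_div (by linarith)).2 (by linarith)
lemma hP0 : 0 < q / (q - 2) := div_pos (hq0 hq) (hq2 hq)

lemma tstar_gt_one : 1 < tstar q := by
  have := hP hq
  have : (1:ℝ) = Real.sqrt 1 := (Real.sqrt_one).symm
  rw [tstar, this]
  exact Real.sqrt_lt_sqrt zero_le_one (hP hq)

lemma tstar_pos : 0 < tstar q := lt_trans one_pos (tstar_gt_one hq)

lemma tstar_sq : tstar q ^ (2:ℕ) = q / (q - 2) := Real.sq_sqrt (hP0 hq).le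

lemma tstar_rpow (r : ℝ) : tstar q ^ r = (q / (q - 2)) ^ (r / 2) := by
  rw [tstar, Real.sqrt_eq_rpow, ← Real.rpow_mul (hP0 hq).le]
  ring_nf

lemma alphaStar_pos : 0 < alphaStar q :=
  mul_pos (div_pos two_pos (hq2 hq)) (Real.rpow_pos_of_pos (div_pos (hq2 hq) (hq0 hq)) _)

lemma key1 : alphaStar q * tstar q ^ q = 2 / (q - 2) := by
  have h1 : ((q - 2) / q : ℝ) = (q / (q - 2))⁻¹ := by
    rw [inv_div]
  rw [alphaStar, tstar_rpow hq, h1, Real.inv_rpow (hP0 hq).le]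
  have h2 : (q / (q - 2) : ℝ) ^ (q / 2) ≠ 0 := (Real.rpow_pos_of_pos (hP0 hq) _).ne'
  rw [mul_assoc, inv_mul_cancel₀ h2, mul_one]

lemma key2 : alphaStar q * tstar q ^ (q - 2) = 2 / q := by
  have h3 : tstar q ^ (q - 2) = tstar q ^ q * (q / (q-2))⁻¹ := by
    rw [tstar_rpow hq, tstar_rpow hq, ← Real.rpow_neg_one (q / (q-2)),
      ← Real.rpow_add (hP0 hq)]
    ring_nf
  rw [h3, ← mul_assoc, key1 hq, inv_div]
  have h4 : q ≠ 0 := (hq0 hq).ne'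
  have h5 : q - 2 ≠ 0 := (hq2 hq).ne'
  field_simp

lemma key0 : fQ q (alphaStar q) (tstar q) = 0 := by
  have h1 : alphaStar q * tstar q ^ q = 2 / (q - 2) := key1 hq
  rw [fQ, tstar_sq hq, h1]
  have h5 : q - 2 ≠ 0 := (hq2 hq).ne'
  field_simp
  ring

end Basics

section Deriv
variable {q : ℝ} (hq : 2 < q)
include hq

lemma cont_rpow : Continuous (fun t : ℝ => t ^ q) :=
  continuous_iff_continuousAt.2 fun x => Real.continuousAt_rpow_const x q (Or.inr (hq0 hq).le)

lemma cont_fQ (α : ℝ) : Continuous (fQ q α) := by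
  unfold fQ
  exact ((continuous_pow 2).sub continuous_const).sub (continuous_const.mul (cont_rpow hq))

lemma hasDerivAt_fQ (α t : ℝ) (ht : t ≠ 0) :
    HasDerivAt (fQ q α) (2 * t - α * q * t ^ (q - 1)) t := by
  have h1 : HasDerivAt (fun s : ℝ => s ^ (2:ℕ)) (2 * t) t := by
    simpa using hasDerivAt_pow 2 t
  have h2 : HasDerivAt (fun s : ℝ => α * s ^ q) (α * (q * t ^ (q - 1))) t :=
    (Real.hasDerivAt_rpow_const (Or.inl ht)).const_mul α
  have := (h1.sub_const 1).sub h2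
  exact this.congr_deriv (by ring)

lemma deriv_factor (α x : ℝ) (hx : 0 < x) :
    2 * x - α * q * x ^ (q - 1) = x * (2 - α * q * x ^ (q - 2)) := by
  rw [show q - 1 = 1 + (q - 2) by ring, Real.rpow_add hx, Real.rpow_one]
  ring

lemma fQ_neg_off_tstar {t : ℝ} (ht : 0 < t) (hne : t ≠ tstar q) :
    fQ q (alphaStar q) t < 0 := by
  set α := alphaStar q with hα
  have hαpos := alphaStar_pos hq
  have hts := tstar_pos hq
  have hkey2 := key2 hq
  have hders : ∀ x : ℝ, 0 < x → deriv (fQ q α) x = x * (2 - α * q * x ^ (q - 2)) := by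
    intro x hx
    rw [(hasDerivAt_fQ hq α x hx.ne').deriv, deriv_factor hq α x hx]
  have hlt : ∀ x : ℝ, 0 < x → x < tstar q → α * q * x ^ (q - 2) < 2 := by
    intro x hx hxt
    have h1 : x ^ (q - 2) < tstar q ^ (q - 2) := Real.rpow_lt_rpow hx.le hxt (hq2 hq)
    have h2 : α * q * x ^ (q - 2) < α * q * tstar q ^ (q - 2) := by
      have : 0 < α * q := mul_pos hαpos (hq0 hq)
      exact (mul_lt_mul_iff_right₀ this).2 h1
    have h3 : α * q * tstar q ^ (q - 2) = 2 := by
      rw [mul_comm α q, mul_assoc, hkey2]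
      field_simp
    linarith
  have hgt : ∀ x : ℝ, tstar q < x → 2 < α * q * x ^ (q - 2) := by
    intro x hxt
    have h1 : tstar q ^ (q - 2) < x ^ (q - 2) := Real.rpow_lt_rpow hts.le hxt (hq2 hq)
    have h2 : α * q * tstar q ^ (q - 2) < α * q * x ^ (q - 2) := by
      have : 0 < α * q := mul_pos hαpos (hq0 hq)
      exact (mul_lt_mul_iff_right₀ this).2 h1
    have h3 : α * q * tstar q ^ (q - 2) = 2 := by
      rw [mul_comm α q, mul_assoc, hkey2]
      field_simp
    linarith
  have hmono : StrictMonoOn (fQ q α) (Set.Icc 0 (tstar q)) := by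
    apply strictMonoOn_of_deriv_pos (convex_Icc _ _) (cont_fQ hq α).continuousOn
    intro x hx
    rw [interior_Icc] at hx
    rw [hders x hx.1]
    exact mul_pos hx.1 (by linarith [hlt x hx.1 hx.2])
  have hanti : StrictAntiOn (fQ q α) (Set.Ici (tstar q)) := by
    apply strictAntiOn_of_deriv_neg (convex_Ici _) (cont_fQ hq α).continuousOn
    intro x hx
    rw [interior_Ici] at hx
    rw [hders x (lt_trans hts hx)]
    exact mul_neg_of_pos_of_neg (lt_trans hts hx) (by linarith [hgt x hx])
  rcases lt_or_gt_of_ne hne with h | h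
  · have := hmono ⟨ht.le, h.le⟩ ⟨hts.le, le_refl _⟩ h
    rwa [key0 hq] at this
  · have := hanti (Set.mem_Ici.2 (le_refl _)) (Set.mem_Ici.2 h.le) h
    rwa [key0 hq] at this

end Deriv

noncomputable def Rq (q : ℝ) : ℝ := (2 / alphaStar q) ^ (q - 2)⁻¹

section Roots
variable {q : ℝ} (hq : 2 < q)
include hq

lemma Rq_pos : 0 < Rq q :=
  Real.rpow_pos_of_pos (div_pos two_pos (alphaStar_pos hq)) _

lemma Rq_pow : Rq q ^ (q - 2) = 2 / alphaStar q :=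
  Real.rpow_inv_rpow (div_pos two_pos (alphaStar_pos hq)).le (hq2 hq).ne'

lemma rpow_split (t : ℝ) (ht : 0 < t) : t ^ q = t ^ (2:ℕ) * t ^ (q - 2) := by
  rw [← Real.rpow_natCast t 2, ← Real.rpow_add ht]
  norm_num

lemma fQ_shift (α α' t : ℝ) : fQ q α t = fQ q α' t + (α' - α) * t ^ q := by
  unfold fQ; ring

lemma tstar_pow_sub : tstar q ^ (q - 2) = 2 / q / alphaStar q := by
  have hk := key2 hq
  have hα := alphaStar_pos hq
  rw [eq_div_iff hα.ne', mul_comm]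
  exact hk

lemma tstar_lt_Rq : tstar q < Rq q := by
  have hα := alphaStar_pos hq
  have h1 : tstar q ^ (q - 2) < Rq q ^ (q - 2) := by
    rw [Rq_pow hq, tstar_pow_sub hq]
    have h2 : 2 / q < 2 := by
      rw [div_lt_iff₀ (hq0 hq)]; nlinarith
    exact div_lt_div_of_pos_right h2 hα
  by_contra hcon
  push_neg at hcon
  exact absurd (Real.rpow_le_rpow (Rq_pos hq).le hcon (hq2 hq).le) (not_le.2 h1)

lemma root_bounds {α t : ℝ} (hα : alphaStar q / 2 < α) (ht : 0 < t)
    (hroot : fQ q α t = 0) : 1 < t ∧ t < Rq q := by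
  have hαs := alphaStar_pos hq
  have hα0 : 0 < α := lt_trans (by linarith) hα
  have hu : 0 < t ^ (q - 2) := Real.rpow_pos_of_pos ht _
  have htq : 0 < t ^ q := Real.rpow_pos_of_pos ht _
  have heq : t ^ (2:ℕ) = 1 + α * t ^ q := by
    unfold fQ at hroot; linarith
  have ht1 : 1 < t := by
    nlinarith [mul_pos hα0 htq]
  have hsplit := rpow_split hq t ht
  have hut : α * t ^ (q - 2) < 1 := by
    have ht2 : (0:ℝ) < t ^ (2:ℕ) := by positivity
    nlinarith [hsplit, heq]
  have hub : t ^ (q - 2) < Rq q ^ (q - 2) := by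
    rw [Rq_pow hq]
    rw [lt_div_iff₀ hαs]
    nlinarith
  constructor
  · exact ht1
  · by_contra hcon
    push_neg at hcon
    exact absurd (Real.rpow_le_rpow (Rq_pos hq).le hcon (hq2 hq).le) (not_le.2 hub)

lemma roots_spec {α : ℝ} (hα : alphaStar q / 2 < α) (hα' : α < alphaStar q) :
    fQ q α (x0 q α) = 0 ∧ fQ q α (x1 q α) = 0 ∧ 1 < x0 q α ∧ x0 q α < tstar q ∧
      tstar q < x1 q α ∧ x1 q α < Rq q ∧
      (∀ t, 0 < t → fQ q α t = 0 → x0 q α ≤ t ∧ t ≤ x1 q α) := by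
  have hαs := alphaStar_pos hq
  have hα0 : 0 < α := lt_trans (by linarith) hα
  have hts1 := tstar_gt_one hq
  have htsR := tstar_lt_Rq hq
  set S : Set ℝ := {t : ℝ | 0 < t ∧ fQ q α t = 0} with hS
  have hSeq : S = (fQ q α) ⁻¹' {0} ∩ Set.Ici 1 := by
    ext t
    constructor
    · rintro ⟨h1, h2⟩
      exact ⟨h2, (root_bounds hq hα h1 h2).1.le⟩
    · rintro ⟨h2, h1⟩
      exact ⟨lt_of_lt_of_le one_pos h1, h2⟩
  have hSclosed : IsClosed S := by
    rw [hSeq]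
    exact (isClosed_singleton.preimage (cont_fQ hq α)).inter isClosed_Ici
  -- value at tstar is positive
  have hfts : 0 < fQ q α (tstar q) := by
    rw [fQ_shift hq α (alphaStar q), key0 hq, zero_add]
    exact mul_pos (by linarith) (Real.rpow_pos_of_pos (tstar_pos hq) _)
  -- value at 1 is negative
  have hf1 : fQ q α 1 < 0 := by
    unfold fQ
    rw [Real.one_rpow]
    norm_num
    exact hα0
  -- value at Rq is negative
  have hfR : fQ q α (Rq q) < 0 := by
    have h1 : 1 < α * Rq q ^ (q - 2) := by
      rw [Rq_pow hq, show α * (2 / alphaStar q) = 2 * α / alphaStar q by ring,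
        lt_div_iff₀ hαs]
      linarith
    have h2 := rpow_split hq (Rq q) (Rq_pos hq)
    have h3 : (0:ℝ) < Rq q ^ (2:ℕ) := pow_pos (Rq_pos hq) 2
    unfold fQ
    nlinarith
  obtain ⟨r, hrmem, hr⟩ := intermediate_value_Ioo hts1.le (cont_fQ hq α).continuousOn
    (show (0:ℝ) ∈ Set.Ioo (fQ q α 1) (fQ q α (tstar q)) from ⟨hf1, hfts⟩)
  obtain ⟨r', hrmem', hr'⟩ := intermediate_value_Ioo' htsR.le (cont_fQ hq α).continuousOn
    (show (0:ℝ) ∈ Set.Ioo (fQ q α (Rq q)) (fQ q α (tstar q)) from ⟨hfR, hfts⟩)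
  have hrS : r ∈ S := ⟨lt_trans one_pos hrmem.1, hr⟩
  have hrS' : r' ∈ S := ⟨lt_trans (tstar_pos hq) hrmem'.1, hr'⟩
  have hne : S.Nonempty := ⟨r, hrS⟩
  have hbdd : BddBelow S := ⟨1, fun t ht => (root_bounds hq hα ht.1 ht.2).1.le⟩
  have hbddA : BddAbove S := ⟨Rq q, fun t ht => (root_bounds hq hα ht.1 ht.2).2.le⟩
  have hx0mem : x0 q α ∈ S := hSclosed.csInf_mem hne hbdd
  have hx1mem : x1 q α ∈ S := hSclosed.csSup_mem hne hbddA
  refine ⟨hx0mem.2, hx1mem.2, (root_bounds hq hα hx0mem.1 hx0mem.2).1, ?_, ?_,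
    (root_bounds hq hα hx1mem.1 hx1mem.2).2, ?_⟩
  · exact lt_of_le_of_lt (csInf_le hbdd hrS) hrmem.2
  · exact lt_of_lt_of_le hrmem'.1 (le_csSup hbddA hrS')
  · intro t ht hroot
    exact ⟨csInf_le hbdd ⟨ht, hroot⟩, le_csSup hbddA ⟨ht, hroot⟩⟩

end Roots

section Loc
variable {q : ℝ} (hq : 2 < q)
include hq

lemma loc_lemma {δ : ℝ} (hδ : 0 < δ) :
    ∀ᶠ α in nhdsWithin (alphaStar q) (Iio (alphaStar q)),
      (alphaStar q / 2 < α ∧ α < alphaStar q) ∧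
      ∀ t, 0 < t → fQ q α t = 0 → |t - tstar q| < δ := by
  have hαs := alphaStar_pos hq
  have hts1 := tstar_gt_one hq
  have htsR := tstar_lt_Rq hq
  set δ' := min δ ((tstar q - 1) / 2) with hδ'def
  have hδ'0 : 0 < δ' := lt_min hδ (by linarith)
  have hδ'1 : δ' < tstar q - 1 := lt_of_le_of_lt (min_le_right _ _) (by linarith)
  have hδ'δ : δ' ≤ δ := min_le_left _ _
  set K : Set ℝ := Icc 1 (Rq q) ∩ (Ioo (tstar q - δ') (tstar q + δ'))ᶜ with hKdef
  have hKclosed : IsClosed K := isClosed_Icc.inter isOpen_Ioo.isClosed_compl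
  have hKcomp : IsCompact K := isCompact_Icc.of_isClosed_subset hKclosed inter_subset_left
  have hKne : K.Nonempty := ⟨1, ⟨le_rfl, by linarith⟩, fun h => absurd h.1 (not_lt.2 (by linarith))⟩
  obtain ⟨z, hzK, hzmax⟩ := hKcomp.exists_isMaxOn hKne (cont_fQ hq (alphaStar q)).continuousOn
  have hz0 : 0 < z := lt_of_lt_of_le one_pos hzK.1.1
  have hzne : z ≠ tstar q := by
    intro h
    exact hzK.2 ⟨by rw [h]; linarith, by rw [h]; linarith⟩
  set c := -fQ q (alphaStar q) z with hcdef
  have hc : 0 < c := neg_pos.2 (fQ_neg_off_tstar hq hz0 hzne)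
  have hR : 0 < Rq q ^ q := Real.rpow_pos_of_pos (Rq_pos hq) _
  set ε := min (alphaStar q / 2) (c / Rq q ^ q) with hεdef
  have hε : 0 < ε := lt_min (by linarith) (div_pos hc hR)
  filter_upwards [Ioo_mem_nhdsLT_of_mem
    (show alphaStar q ∈ Ioc (alphaStar q - ε) (alphaStar q) from ⟨by linarith, le_rfl⟩)]
    with α hα
  have hA : alphaStar q / 2 < α := by
    have := min_le_left (alphaStar q / 2) (c / Rq q ^ q)
    have := hα.1
    simp only [hεdef] at this ⊢
    linarith [min_le_left (alphaStar q / 2) (c / Rq q ^ q)]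
  refine ⟨⟨hA, hα.2⟩, ?_⟩
  intro t ht hroot
  by_contra hcon
  push_neg at hcon
  obtain ⟨ht1, htR⟩ := root_bounds hq hA ht hroot
  have htK : t ∈ K := by
    refine ⟨⟨ht1.le, htR.le⟩, fun hmem => ?_⟩
    have : |t - tstar q| < δ' := abs_lt.2 ⟨by linarith [hmem.1], by linarith [hmem.2]⟩
    linarith [lt_of_lt_of_le this hδ'δ]
  have h1 : fQ q (alphaStar q) t ≤ -c := by
    have := hzmax htK
    simp only [Set.mem_setOf_eq] at this
    rw [hcdef]; linarith
  have h2 : (alphaStar q - α) * t ^ q < c := by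
    have e1 : t ^ q ≤ Rq q ^ q := Real.rpow_le_rpow ht.le htR.le (hq0 hq).le
    have e2 : alphaStar q - α < ε := by linarith [hα.1]
    have e3 : 0 < alphaStar q - α := by linarith [hα.2]
    have e4 : ε * Rq q ^ q ≤ c := by
      have := min_le_right (alphaStar q / 2) (c / Rq q ^ q)
      calc ε * Rq q ^ q ≤ c / Rq q ^ q * Rq q ^ q := by
            exact mul_le_mul_of_nonneg_right this hR.le
        _ = c := by field_simp
    calc (alphaStar q - α) * t ^ q ≤ (alphaStar q - α) * Rq q ^ q :=
          mul_le_mul_of_nonneg_left e1 e3.le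
      _ < ε * Rq q ^ q := mul_lt_mul_of_pos_right e2 hR
      _ ≤ c := e4
  have := fQ_shift hq α (alphaStar q) t
  rw [hroot] at this
  linarith

lemma x0_x1_tendsto :
    Tendsto (fun α => x0 q α) (nhdsWithin (alphaStar q) (Iio (alphaStar q))) (nhds (tstar q)) ∧
    Tendsto (fun α => x1 q α) (nhdsWithin (alphaStar q) (Iio (alphaStar q))) (nhds (tstar q)) := by
  constructor <;>
  · rw [Metric.tendsto_nhds]
    intro ε hε
    filter_upwards [loc_lemma hq hε] with α ⟨⟨h1, h2⟩, h3⟩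
    obtain ⟨ha, hb, hc, hd, he, hf, hg⟩ := roots_spec hq h1 h2
    rw [Real.dist_eq]
    first
    | exact h3 _ (lt_trans one_pos hc) ha
    | exact h3 _ (lt_trans (tstar_pos hq) he) hb

end Loc

section Sandwich
variable {q : ℝ} (hq : 2 < q)
include hq

lemma hasDeriv_g (α k a b t : ℝ) (ht : t ≠ 0) :
    HasDerivAt (fun s => fQ q α s - k * ((s - a) * (b - s)))
      (2 * t - α * q * t ^ (q - 1) - k * ((b - t) - (t - a))) t := by
  have h1 := hasDerivAt_fQ hq α t ht
  have h2 : HasDerivAt (fun s : ℝ => (s - a) * (b - s)) ((b - t) - (t - a)) t := by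
    have h := (((hasDerivAt_id t).sub_const a).mul ((hasDerivAt_const t b).sub (hasDerivAt_id t)))
    simp only [id_eq] at h
    exact h.congr_deriv (by simp only [Pi.sub_apply, id_eq]; ring)
  exact h1.sub (h2.const_mul k)

lemma hasDeriv_g1 (α k a b t : ℝ) (ht : t ≠ 0) :
    HasDerivAt (fun s => 2 * s - α * q * s ^ (q - 1) - k * ((b - s) - (s - a)))
      (2 - α * q * ((q - 1) * t ^ (q - 2)) + 2 * k) t := by
  have h1 : HasDerivAt (fun s : ℝ => 2 * s) 2 t := by
    simpa using (hasDerivAt_id t).const_mul 2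
  have h2 : HasDerivAt (fun s : ℝ => α * q * s ^ (q - 1)) (α * q * ((q - 1) * t ^ (q - 1 - 1))) t :=
    (Real.hasDerivAt_rpow_const (Or.inl ht)).const_mul (α * q)
  have h3 : HasDerivAt (fun s : ℝ => k * ((b - s) - (s - a))) (k * (0 - 1 - 1)) t := by
    have h4 := (((hasDerivAt_const t b).sub (hasDerivAt_id t))).sub ((hasDerivAt_id t).sub_const a)
    simp only [id_eq] at h4
    exact h4.const_mul k
  have := (h1.sub h2).sub h3
  exact this.congr_deriv (by rw [show q - 1 - 1 = q - 2 by ring]; ring)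

lemma concave_aux (α k a b : ℝ) (ha : 0 < a) (hab : a < b)
    (hk : ∀ t ∈ Ioo a b, 2 - α * q * ((q - 1) * t ^ (q - 2)) + 2 * k ≤ 0) :
    ConcaveOn ℝ (Icc a b) (fun s => fQ q α s - k * ((s - a) * (b - s))) := by
  set g : ℝ → ℝ := fun s => fQ q α s - k * ((s - a) * (b - s)) with hg
  have hpos : ∀ t ∈ Ioo a b, (0:ℝ) < t := fun t ht => lt_trans ha ht.1
  have hder : ∀ t ∈ Ioo a b,
      HasDerivAt g (2 * t - α * q * t ^ (q - 1) - k * ((b - t) - (t - a))) t :=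
    fun t ht => hasDeriv_g hq α k a b t (hpos t ht).ne'
  have hderiv_eq : ∀ t ∈ Ioo a b,
      deriv g t = 2 * t - α * q * t ^ (q - 1) - k * ((b - t) - (t - a)) :=
    fun t ht => (hder t ht).deriv
  have hder2 : ∀ t ∈ Ioo a b,
      HasDerivAt (deriv g) (2 - α * q * ((q - 1) * t ^ (q - 2)) + 2 * k) t := by
    intro t ht
    have h1 := hasDeriv_g1 hq α k a b t (hpos t ht).ne'
    apply h1.congr_of_eventuallyEq
    exact Filter.eventuallyEq_of_mem (isOpen_Ioo.mem_nhds ht) hderiv_eq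
  have hcont : ContinuousOn g (Icc a b) :=
    (((cont_fQ hq α)).sub (continuous_const.mul
      ((continuous_id.sub continuous_const).mul
        (continuous_const.sub continuous_id)))).continuousOn
  apply concaveOn_of_deriv2_nonpos (convex_Icc a b) hcont
  · rw [interior_Icc]; exact fun t ht => ((hder t ht).differentiableAt.differentiableWithinAt)
  · rw [interior_Icc]; exact fun t ht => ((hder2 t ht).differentiableAt.differentiableWithinAt)
  · rw [interior_Icc]; intro t ht
    have he : deriv^[2] g t = deriv (deriv g) t := rfl
    rw [he, (hder2 t ht).deriv]
    exact hk t ht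

lemma convex_aux (α k a b : ℝ) (ha : 0 < a) (hab : a < b)
    (hk : ∀ t ∈ Ioo a b, 0 ≤ 2 - α * q * ((q - 1) * t ^ (q - 2)) + 2 * k) :
    ConvexOn ℝ (Icc a b) (fun s => fQ q α s - k * ((s - a) * (b - s))) := by
  set g : ℝ → ℝ := fun s => fQ q α s - k * ((s - a) * (b - s)) with hg
  have hpos : ∀ t ∈ Ioo a b, (0:ℝ) < t := fun t ht => lt_trans ha ht.1
  have hder : ∀ t ∈ Ioo a b,
      HasDerivAt g (2 * t - α * q * t ^ (q - 1) - k * ((b - t) - (t - a))) t :=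
    fun t ht => hasDeriv_g hq α k a b t (hpos t ht).ne'
  have hderiv_eq : ∀ t ∈ Ioo a b,
      deriv g t = 2 * t - α * q * t ^ (q - 1) - k * ((b - t) - (t - a)) :=
    fun t ht => (hder t ht).deriv
  have hder2 : ∀ t ∈ Ioo a b,
      HasDerivAt (deriv g) (2 - α * q * ((q - 1) * t ^ (q - 2)) + 2 * k) t := by
    intro t ht
    have h1 := hasDeriv_g1 hq α k a b t (hpos t ht).ne'
    apply h1.congr_of_eventuallyEq
    exact Filter.eventuallyEq_of_mem (isOpen_Ioo.mem_nhds ht) hderiv_eq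
  have hcont : ContinuousOn g (Icc a b) :=
    (((cont_fQ hq α)).sub (continuous_const.mul
      ((continuous_id.sub continuous_const).mul
        (continuous_const.sub continuous_id)))).continuousOn
  apply convexOn_of_deriv2_nonneg (convex_Icc a b) hcont
  · rw [interior_Icc]; exact fun t ht => ((hder t ht).differentiableAt.differentiableWithinAt)
  · rw [interior_Icc]; exact fun t ht => ((hder2 t ht).differentiableAt.differentiableWithinAt)
  · rw [interior_Icc]; intro t ht
    have he : deriv^[2] g t = deriv (deriv g) t := rfl
    rw [he, (hder2 t ht).deriv]
    exact hk t ht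

lemma sandwich {α a b m M : ℝ} (hα : 0 < α) (ha : 0 < a) (hab : a < b)
    (hfa : fQ q α a = 0) (hfb : fQ q α b = 0)
    (h2 : 2 + 2 * m ≤ α * q * (q - 1) * a ^ (q - 2))
    (h3 : α * q * (q - 1) * b ^ (q - 2) ≤ 2 + 2 * M) :
    ∀ t ∈ Icc a b, m * ((t - a) * (b - t)) ≤ fQ q α t ∧ fQ q α t ≤ M * ((t - a) * (b - t)) := by
  have hq1 : (0:ℝ) < q - 1 := by linarith
  have haq : 0 < α * q * (q - 1) := by positivity
  have hmono : ∀ x y : ℝ, 0 < x → x ≤ y →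
      α * q * (q - 1) * x ^ (q - 2) ≤ α * q * (q - 1) * y ^ (q - 2) := fun x y hx hxy =>
    mul_le_mul_of_nonneg_left (Real.rpow_le_rpow hx.le hxy (by linarith)) haq.le
  intro t htmem
  have hseg : t ∈ segment ℝ a b := by rw [segment_eq_Icc hab.le]; exact htmem
  have hamem : a ∈ Icc a b := left_mem_Icc.2 hab.le
  have hbmem : b ∈ Icc a b := right_mem_Icc.2 hab.le
  constructor
  · have hcv := concave_aux hq α m a b ha hab (fun s hs => by
      have e1 := hmono a s ha hs.1.le
      have e2 : α * q * ((q - 1) * s ^ (q - 2)) = α * q * (q - 1) * s ^ (q - 2) := by ring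
      linarith)
    have hmin := hcv.ge_on_segment hamem hbmem hseg
    rw [hfa, hfb] at hmin
    have : min (0 - m * ((a - a) * (b - a))) (0 - m * ((b - a) * (b - b))) = 0 := by
      norm_num
    rw [this] at hmin
    linarith
  · have hcv := convex_aux hq α M a b ha hab (fun s hs => by
      have e1 := hmono s b (lt_trans ha hs.1) hs.2.le
      have e2 : α * q * ((q - 1) * s ^ (q - 2)) = α * q * (q - 1) * s ^ (q - 2) := by ring
      linarith)
    have hmax := hcv.le_on_segment hamem hbmem hseg
    rw [hfa, hfb] at hmax
    have : max (0 - M * ((a - a) * (b - a))) (0 - M * ((b - a) * (b - b))) = 0 := by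
      norm_num
    rw [this] at hmax
    linarith

end Sandwich

section BaseIntegral

lemma J_meas : Measurable (fun x : ℝ => 1 / Real.sqrt (1 - x ^ 2)) := by
  simp only [one_div]
  exact ((continuous_const.sub (continuous_pow 2)).sqrt.measurable).inv

lemma J_int_right : IntervalIntegrable (fun x : ℝ => 1 / Real.sqrt (1 - x ^ 2))
    volume 0 1 := by
  have hbound : IntervalIntegrable (fun x : ℝ => (1 - x) ^ (-(1/2) : ℝ)) volume 0 1 := by
    have h := intervalIntegral.intervalIntegrable_rpow' (a := 0) (b := 1)
      (r := -(1/2)) (by norm_num)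
    simpa using (h.comp_sub_left 1).symm
  apply hbound.mono_fun (J_meas.aestronglyMeasurable)
  rw [Filter.EventuallyLE, ae_restrict_iff' measurableSet_uIoc]
  refine Filter.Eventually.of_forall (fun x hx => ?_)
  rw [Set.uIoc_of_le (by norm_num : (0:ℝ) ≤ 1)] at hx
  obtain ⟨hx0, hx1⟩ := hx
  have h1x : 0 ≤ 1 - x := by linarith
  have hrw : (1 - x) ^ (-(1/2) : ℝ) = 1 / Real.sqrt (1 - x) := by
    rw [Real.rpow_neg h1x, Real.sqrt_eq_rpow]
    norm_num
  have hle : Real.sqrt (1 - x) ≤ Real.sqrt (1 - x ^ 2) := by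
    apply Real.sqrt_le_sqrt
    nlinarith
  have hnn1 : 0 ≤ 1 / Real.sqrt (1 - x ^ 2) := by positivity
  have hnn2 : 0 ≤ (1 - x) ^ (-(1/2) : ℝ) := by positivity
  rw [Real.norm_eq_abs, Real.norm_eq_abs, abs_of_nonneg hnn1, abs_of_nonneg hnn2, hrw]
  rcases eq_or_lt_of_le hx1 with heq | hlt
  · rw [heq]
    norm_num
  · apply one_div_le_one_div_of_le _ hle
    exact Real.sqrt_pos.2 (by linarith)

lemma J_int : IntervalIntegrable (fun x : ℝ => 1 / Real.sqrt (1 - x ^ 2))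
    volume (-1) 1 := by
  have h2 : IntervalIntegrable (fun x : ℝ => 1 / Real.sqrt (1 - x ^ 2)) volume (-1) 0 := by
    have h3 := (IntervalIntegrable.iff_comp_neg).mp J_int_right
    have h4 : (fun x : ℝ => 1 / Real.sqrt (1 - (-x) ^ 2)) =
        fun x : ℝ => 1 / Real.sqrt (1 - x ^ 2) := by
      funext x; rw [neg_pow]; norm_num
    rw [h4] at h3
    simpa using h3.symm
  exact h2.trans J_int_right

lemma J_val : ∫ x in (-1:ℝ)..1, 1 / Real.sqrt (1 - x ^ 2) = Real.pi := by
  have h := intervalIntegral.integral_eq_sub_of_hasDerivAt_of_le (by norm_num : (-1:ℝ) ≤ 1)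
    Real.continuous_arcsin.continuousOn
    (fun x hx => Real.hasDerivAt_arcsin hx.1.ne' hx.2.ne) J_int
  rw [h, Real.arcsin_one, Real.arcsin_neg_one]
  ring

lemma base_identity {a b : ℝ} (hab : a < b) (t : ℝ) :
    1 / Real.sqrt ((t - a) * (b - t)) =
      (2 / (b - a)) * (1 / Real.sqrt (1 - ((2/(b-a)) * t + (-(a+b)/(b-a))) ^ 2)) := by
  have hba : 0 < b - a := by linarith
  set k := 2 / (b - a) with hk
  set d := -(a+b)/(b-a) with hd
  have hkpos : 0 < k := by positivity
  have h1 : 1 - (k * t + d) ^ 2 = k ^ 2 * ((t - a) * (b - t)) := by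
    rw [hk, hd]
    field_simp
    ring
  rw [h1, show (k:ℝ)^2 * ((t - a) * (b - t)) = k^2 * ((t-a)*(b-t)) from rfl,
    Real.sqrt_mul (sq_nonneg k), Real.sqrt_sq hkpos.le]
  rcases eq_or_ne (Real.sqrt ((t - a) * (b - t))) 0 with h0 | h0
  · rw [h0, mul_zero]
    norm_num
  · field_simp

lemma base_int {a b : ℝ} (hab : a < b) :
    IntervalIntegrable (fun t => 1 / Real.sqrt ((t - a) * (b - t))) volume a b := by
  have hba : 0 < b - a := by linarith
  set k := 2 / (b - a) with hk
  set d := -(a+b)/(b-a) with hd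
  have hkpos : 0 < k := by positivity
  have h1 : IntervalIntegrable (fun x : ℝ => 1 / Real.sqrt (1 - (x + d) ^ 2))
      volume (-1 - d) (1 - d) := J_int.comp_add_right d
  have h2 := h1.comp_mul_left (c := k)
  have h3 : (-1 - d) / k = a := by rw [hk, hd]; field_simp; ring
  have h4 : (1 - d) / k = b := by rw [hk, hd]; field_simp; ring
  rw [h3, h4] at h2
  have h5 := h2.const_mul k
  have hfun : (fun t => 1 / Real.sqrt ((t - a) * (b - t))) =
      fun t => k * (1 / Real.sqrt (1 - (k * t + d) ^ 2)) := funext (base_identity hab)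
  rw [hfun]
  exact h5

lemma base_val {a b : ℝ} (hab : a < b) :
    ∫ t in a..b, 1 / Real.sqrt ((t - a) * (b - t)) = Real.pi := by
  have hba : 0 < b - a := by linarith
  set k := 2 / (b - a) with hk
  set d := -(a+b)/(b-a) with hd
  have hkpos : 0 < k := by positivity
  have hfun : (fun t => 1 / Real.sqrt ((t - a) * (b - t))) =
      fun t => k * (1 / Real.sqrt (1 - (k * t + d) ^ 2)) := funext (base_identity hab)
  have hsub := intervalIntegral.integral_comp_mul_add
    (a := a) (b := b) (fun x : ℝ => 1 / Real.sqrt (1 - x ^ 2)) hkpos.ne' d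
  have e1 : k * a + d = -1 := by rw [hk, hd]; field_simp; ring
  have e2 : k * b + d = 1 := by rw [hk, hd]; field_simp; ring
  rw [e1, e2, J_val] at hsub
  calc ∫ t in a..b, 1 / Real.sqrt ((t - a) * (b - t))
      = ∫ t in a..b, k * (1 / Real.sqrt (1 - (k * t + d) ^ 2)) := by rw [hfun]
    _ = k * ∫ t in a..b, 1 / Real.sqrt (1 - (k * t + d) ^ 2) :=
        intervalIntegral.integral_const_mul _ _
    _ = k * (k⁻¹ * Real.pi) := by rw [hsub]; norm_num
    _ = Real.pi := by field_simp

end BaseIntegral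

section Compare
variable {q : ℝ} (hq : 2 < q)
include hq

lemma Iq_bounds {α a b m M : ℝ} (hab : a < b) (hm : 0 < m)
    (hbound : ∀ t ∈ Icc a b,
      m * ((t - a) * (b - t)) ≤ fQ q α t ∧ fQ q α t ≤ M * ((t - a) * (b - t))) :
    Real.pi / Real.sqrt M ≤ (∫ t in a..b, 1 / Real.sqrt (fQ q α t)) ∧
      (∫ t in a..b, 1 / Real.sqrt (fQ q α t)) ≤ Real.pi / Real.sqrt m := by
  have hM : 0 < M := by
    rcases exists_between hab with ⟨c, hc1, hc2⟩
    have hc := hbound c ⟨hc1.le, hc2.le⟩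
    have hX : 0 < (c - a) * (b - c) := mul_pos (by linarith) (by linarith)
    nlinarith [hc.1, hc.2]
  have hXnn : ∀ t ∈ Icc a b, 0 ≤ (t - a) * (b - t) := fun t ht =>
    mul_nonneg (by linarith [ht.1]) (by linarith [ht.2])
  -- rewrites
  have hrw : ∀ k : ℝ, 0 < k → ∀ X : ℝ,
      1 / Real.sqrt (k * X) = (Real.sqrt k)⁻¹ * (1 / Real.sqrt X) := by
    intro k hk X
    rw [Real.sqrt_mul hk.le, one_div, mul_inv, one_div]
  -- pointwise upper
  have hpt_up : ∀ t ∈ Icc a b,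
      1 / Real.sqrt (fQ q α t) ≤ 1 / Real.sqrt (m * ((t - a) * (b - t))) := by
    intro t ht
    rcases eq_or_lt_of_le (hXnn t ht) with h0 | h0
    · have eM : M * ((t - a) * (b - t)) = 0 := by rw [← h0]; ring
      have em : m * ((t - a) * (b - t)) = 0 := by rw [← h0]; ring
      have hf0 : fQ q α t = 0 :=
        le_antisymm (by linarith [(hbound t ht).2]) (by linarith [(hbound t ht).1])
      rw [hf0, ← h0]
      norm_num
    · apply one_div_le_one_div_of_le
      · exact Real.sqrt_pos.2 (mul_pos hm h0)
      · exact Real.sqrt_le_sqrt (hbound t ht).1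
  -- pointwise lower
  have hpt_lo : ∀ t ∈ Icc a b,
      1 / Real.sqrt (M * ((t - a) * (b - t))) ≤ 1 / Real.sqrt (fQ q α t) := by
    intro t ht
    rcases eq_or_lt_of_le (hXnn t ht) with h0 | h0
    · have eM : M * ((t - a) * (b - t)) = 0 := by rw [← h0]; ring
      have em : m * ((t - a) * (b - t)) = 0 := by rw [← h0]; ring
      have hf0 : fQ q α t = 0 :=
        le_antisymm (by linarith [(hbound t ht).2]) (by linarith [(hbound t ht).1])
      rw [hf0, ← h0]
      norm_num
    · apply one_div_le_one_div_of_le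
      · exact Real.sqrt_pos.2 (lt_of_lt_of_le (mul_pos hm h0) (hbound t ht).1)
      · exact Real.sqrt_le_sqrt (hbound t ht).2
  -- integrability of the bases
  have hbase := base_int hab
  have hint_m : IntervalIntegrable (fun t => 1 / Real.sqrt (m * ((t - a) * (b - t))))
      volume a b := by
    have := hbase.const_mul (Real.sqrt m)⁻¹
    apply this.congr
    intro t _
    exact (hrw m hm _).symm
  have hint_M : IntervalIntegrable (fun t => 1 / Real.sqrt (M * ((t - a) * (b - t))))
      volume a b := by
    have := hbase.const_mul (Real.sqrt M)⁻¹
    apply this.congr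
    intro t _
    exact (hrw M hM _).symm
  -- integrability of the middle function
  have hmeas : Measurable (fun t => 1 / Real.sqrt (fQ q α t)) := by
    simp only [one_div]
    exact ((cont_fQ hq α).sqrt.measurable).inv
  have hint_f : IntervalIntegrable (fun t => 1 / Real.sqrt (fQ q α t)) volume a b := by
    apply hint_m.mono_fun hmeas.aestronglyMeasurable
    rw [Filter.EventuallyLE, ae_restrict_iff' measurableSet_uIoc]
    refine Filter.Eventually.of_forall (fun t ht => ?_)
    rw [Set.uIoc_of_le hab.le] at ht
    have htmem : t ∈ Icc a b := ⟨ht.1.le, ht.2⟩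
    have h1 : (0:ℝ) ≤ 1 / Real.sqrt (fQ q α t) := by positivity
    have h2 : (0:ℝ) ≤ 1 / Real.sqrt (m * ((t - a) * (b - t))) := by positivity
    rw [Real.norm_eq_abs, Real.norm_eq_abs, abs_of_nonneg h1, abs_of_nonneg h2]
    exact hpt_up t htmem
  -- integral values
  have hval_m : (∫ t in a..b, 1 / Real.sqrt (m * ((t - a) * (b - t))))
      = Real.pi / Real.sqrt m := by
    have : (fun t => 1 / Real.sqrt (m * ((t - a) * (b - t)))) =
        fun t => (Real.sqrt m)⁻¹ * (1 / Real.sqrt ((t - a) * (b - t))) := by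
      funext t; rw [hrw m hm]
    rw [this, intervalIntegral.integral_const_mul, base_val hab, div_eq_inv_mul]
  have hval_M : (∫ t in a..b, 1 / Real.sqrt (M * ((t - a) * (b - t))))
      = Real.pi / Real.sqrt M := by
    have : (fun t => 1 / Real.sqrt (M * ((t - a) * (b - t)))) =
        fun t => (Real.sqrt M)⁻¹ * (1 / Real.sqrt ((t - a) * (b - t))) := by
      funext t; rw [hrw M hM]
    rw [this, intervalIntegral.integral_const_mul, base_val hab, div_eq_inv_mul]
  constructor
  · rw [← hval_M]
    exact intervalIntegral.integral_mono_on hab.le hint_M hint_f hpt_lo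
  · rw [← hval_m]
    exact intervalIntegral.integral_mono_on hab.le hint_f hint_m hpt_up

end Compare


/-- For q > 2, I_q(α) → π/√(q-2) as α → α*(q) from the left. -/
theorem stmt_5 (q : ℝ) (hq : 2 < q) :
    Tendsto (Iq q) (nhdsWithin (alphaStar q) (Iio (alphaStar q)))
      (nhds (Real.pi / Real.sqrt (q - 2))) := by
  have hq2' := hq2 hq
  have hq0' := hq0 hq
  set L := Real.pi / Real.sqrt (q - 2) with hL
  rw [Metric.tendsto_nhds]
  intro ε hε
  -- choose ε'
  have hsne : Real.sqrt (q - 2) ≠ 0 := ne_of_gt (Real.sqrt_pos.2 hq2')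
  have hcont : ContinuousAt (fun s : ℝ => Real.pi / Real.sqrt s) (q - 2) :=
    continuousAt_const.div (Real.continuous_sqrt.continuousAt) hsne
  obtain ⟨δ₀, hδ₀, hball⟩ := Metric.continuousAt_iff.1 hcont ε hε
  set ε' := min (δ₀ / 2) ((q - 2) / 2) with hε'def
  have hε'pos : 0 < ε' := lt_min (by linarith) (by linarith)
  have hε'δ : ε' < δ₀ := lt_of_le_of_lt (min_le_left _ _) (by linarith)
  have hε'q : ε' ≤ (q - 2) / 2 := min_le_right _ _
  set m := q - 2 - ε' with hmdef
  set M := q - 2 + ε' with hMdef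
  have hm0 : 0 < m := by simp only [hmdef]; linarith
  have hdm : dist m (q - 2) < δ₀ := by
    rw [Real.dist_eq, hmdef]
    rw [abs_of_nonpos (by linarith)]
    linarith
  have hdM : dist M (q - 2) < δ₀ := by
    rw [Real.dist_eq, hMdef]
    rw [abs_of_nonneg (by linarith)]
    linarith
  have h1 := hball hdm
  have h2 := hball hdM
  simp only [Real.dist_eq] at h1 h2
  have h1' := abs_lt.1 h1
  have h2' := abs_lt.1 h2
  -- eventual conditions
  have hx0 := (x0_x1_tendsto hq).1
  have hx1 := (x0_x1_tendsto hq).2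
  have hαt : Tendsto (fun α : ℝ => α) (nhdsWithin (alphaStar q) (Iio (alphaStar q)))
      (nhds (alphaStar q)) := Filter.tendsto_id.mono_left nhdsWithin_le_nhds
  have hrpow : ContinuousAt (fun x : ℝ => x ^ (q - 2)) (tstar q) :=
    Real.continuousAt_rpow_const (tstar q) (q - 2) (Or.inl (tstar_pos hq).ne')
  have hu0 : Tendsto (fun α => α * q * (q - 1) * (x0 q α) ^ (q - 2))
      (nhdsWithin (alphaStar q) (Iio (alphaStar q)))
      (nhds (alphaStar q * q * (q - 1) * tstar q ^ (q - 2))) :=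
    (((hαt.mul_const q).mul_const (q - 1)).mul (hrpow.tendsto.comp hx0))
  have hu1 : Tendsto (fun α => α * q * (q - 1) * (x1 q α) ^ (q - 2))
      (nhdsWithin (alphaStar q) (Iio (alphaStar q)))
      (nhds (alphaStar q * q * (q - 1) * tstar q ^ (q - 2))) :=
    (((hαt.mul_const q).mul_const (q - 1)).mul (hrpow.tendsto.comp hx1))
  have hV : alphaStar q * q * (q - 1) * tstar q ^ (q - 2) = 2 * (q - 1) := by
    have hk := key2 hq
    have : alphaStar q * q * (q - 1) * tstar q ^ (q - 2) =
        (alphaStar q * tstar q ^ (q - 2)) * q * (q - 1) := by ring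
    rw [this, hk]
    field_simp
  rw [hV] at hu0 hu1
  have hlt1 : 2 + 2 * m < 2 * (q - 1) := by simp only [hmdef]; linarith
  have hlt2 : 2 * (q - 1) < 2 + 2 * M := by simp only [hMdef]; linarith
  have hev1 := hu0.eventually (eventually_ge_nhds hlt1)
  have hev2 := hu1.eventually (eventually_le_nhds hlt2)
  filter_upwards [loc_lemma hq one_pos, hev1, hev2] with α hloc he1 he2
  obtain ⟨⟨hA, hB⟩, _⟩ := hloc
  obtain ⟨ha, hb, h1a, hat, htb, hbR, _⟩ := roots_spec hq hA hB
  have hα0 : 0 < α := lt_trans (half_pos (alphaStar_pos hq)) hA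
  have ha0 : 0 < x0 q α := lt_trans one_pos h1a
  have hab : x0 q α < x1 q α := lt_trans hat htb
  have hbounds := sandwich hq hα0 ha0 hab ha hb he1 he2
  have hIq := Iq_bounds hq hab hm0 hbounds
  rw [Real.dist_eq, abs_lt]
  have hIq1 : Real.pi / Real.sqrt M ≤ Iq q α := by rw [Iq]; exact hIq.1
  have hIq2 : Iq q α ≤ Real.pi / Real.sqrt m := by rw [Iq]; exact hIq.2
  constructor
  · linarith [h2'.1]
  · linarith [h1'.2]
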